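/- With L_1 and L̃_1 as in Bérenger's splitting and τ ≠ 0: if the eigenvalue 0 of L_1(τ,ξ) is semi-simple (i.e. Ker L_1(τ,ξ) ∩ Range L_1(τ,ξ) = {0}), then the eigenvalue 0 of L̃_1(τ,ξ) is semi-simple, i.e. Ker L̃_1(τ,ξ) ⊕ Range L̃_1(τ,ξ) = ℂ^{dN}. -/

import Mathlib

open Matrix

/-- If the eigenvalue `0` of `L₁(τ,ξ)` (with `τ ≠ 0`, `det L₁(τ,ξ) = 0`) is
semi-simple, then the eigenvalue `0` of the Bérenger split symbol `L̃₁(τ,ξ)` is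
semi-simple: `Ker L̃₁ ⊕ Range L̃₁ = ℂ^{dN}`. -/
theorem berenger_semisimple (N d : ℕ)
    (A : Fin d → Matrix (Fin N) (Fin N) ℂ)
    (τ : ℂ) (hτ : τ ≠ 0) (ξ : Fin d → ℂ)
    (L1 : Matrix (Fin N) (Fin N) ℂ)
    (hL1 : L1 = τ • (1 : Matrix (Fin N) (Fin N) ℂ) + ∑ l, ξ l • A l)
    (hchar : L1.det = 0)
    (hss : LinearMap.ker L1.mulVecLin ⊓ LinearMap.range L1.mulVecLin = ⊥)
    (tL1 : Matrix (Fin d × Fin N) (Fin d × Fin N) ℂ)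
    (htL1 : tL1 = Matrix.of fun p q : Fin d × Fin N =>
        ξ p.1 * A p.1 p.2 q.2 + if p = q then τ else 0) :
    LinearMap.ker tL1.mulVecLin ⊓ LinearMap.range tL1.mulVecLin = ⊥ ∧
    LinearMap.ker tL1.mulVecLin ⊔ LinearMap.range tL1.mulVecLin = ⊤ := by
  -- key formula for tL1.mulVec
  have key : ∀ Φ : Fin d × Fin N → ℂ, ∀ p : Fin d × Fin N,
      tL1.mulVec Φ p = τ * Φ p + ξ p.1 * ∑ j, A p.1 p.2 j * (∑ m, Φ (m, j)) := by
    intro Φ p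
    simp only [htL1, Matrix.mulVec, dotProduct, Matrix.of_apply, add_mul,
      Finset.sum_add_distrib]
    have h1 : ∑ q : Fin d × Fin N, (if p = q then τ else 0) * Φ q = τ * Φ p := by
      simp [ite_mul, Finset.sum_ite_eq]
    have h2 : ∑ q : Fin d × Fin N, ξ p.1 * A p.1 p.2 q.2 * Φ q
        = ξ p.1 * ∑ j, A p.1 p.2 j * (∑ m, Φ (m, j)) := by
      rw [Fintype.sum_prod_type, Finset.sum_comm, Finset.mul_sum]
      refine Finset.sum_congr rfl fun j _ => ?_
      rw [Finset.mul_sum, Finset.mul_sum]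
      refine Finset.sum_congr rfl fun m _ => ?_
      ring
    rw [h1, h2, add_comm]
  -- summing over the first index gives L1 applied to the partial sum
  have sumkey : ∀ Φ : Fin d × Fin N → ℂ, ∀ i : Fin N,
      ∑ l, tL1.mulVec Φ (l, i) = L1.mulVec (fun j => ∑ m, Φ (m, j)) i := by
    intro Φ i
    simp only [key]
    rw [Finset.sum_add_distrib]
    have hrhs : L1.mulVec (fun j => ∑ m, Φ (m, j)) i
        = τ * (∑ m, Φ (m, i)) + ∑ l, ξ l * ∑ j, A l i j * (∑ m, Φ (m, j)) := by
      subst hL1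
      simp only [Matrix.mulVec, dotProduct, Matrix.add_apply, Matrix.smul_apply,
        Matrix.one_apply, Finset.sum_apply, smul_eq_mul, add_mul, Finset.sum_add_distrib]
      congr 1
      · simp [mul_ite, ite_mul, Finset.sum_ite_eq]
      · simp only [Matrix.sum_apply, Matrix.smul_apply, smul_eq_mul, Finset.sum_mul]
        rw [Finset.sum_comm]
        refine Finset.sum_congr rfl fun l _ => ?_
        rw [Finset.mul_sum]
        refine Finset.sum_congr rfl fun j _ => ?_
        ring
    rw [hrhs, ← Finset.mul_sum]
  have hinf : LinearMap.ker tL1.mulVecLin ⊓ LinearMap.range tL1.mulVecLin = ⊥ := by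
    rw [eq_bot_iff]
    intro Φ hΦ
    obtain ⟨hker0, Ψ, hΨ⟩ := Submodule.mem_inf.mp hΦ
    have hker : tL1 *ᵥ Φ = 0 := hker0
    have hΨ' : tL1 *ᵥ Ψ = Φ := hΨ
    set S : Fin N → ℂ := fun j => ∑ m, Φ (m, j) with hSdef
    have hS_ker : S ∈ LinearMap.ker L1.mulVecLin := by
      simp only [LinearMap.mem_ker, Matrix.mulVecLin_apply]
      funext i
      rw [← sumkey Φ i, hker]
      simp
    have hS_range : S ∈ LinearMap.range L1.mulVecLin := by
      refine ⟨fun j => ∑ m, Ψ (m, j), ?_⟩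
      simp only [Matrix.mulVecLin_apply]
      funext i
      rw [← sumkey Ψ i, hΨ']
    have hS0 : S = 0 := by
      have := hss ▸ (Submodule.mem_inf.mpr ⟨hS_ker, hS_range⟩)
      simpa using this
    have hΦ0 : ∀ p, Φ p = 0 := by
      intro p
      have h1 := key Φ p
      rw [hker] at h1
      simp only [Pi.zero_apply] at h1
      have hs : ∀ j, (∑ m, Φ (m, j)) = 0 := fun j => congrFun hS0 j
      rw [show (∑ j, A p.1 p.2 j * (∑ m, Φ (m, j))) = 0 by simp [hs]] at h1
      have : τ * Φ p = 0 := by linear_combination -h1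
      rcases mul_eq_zero.mp this with h | h
      · exact absurd h hτ
      · exact h
    simpa [Submodule.mem_bot] using (funext hΦ0 : Φ = 0)
  refine ⟨hinf, ?_⟩
  have h1 := Submodule.finrank_sup_add_finrank_inf_eq
    (LinearMap.ker tL1.mulVecLin) (LinearMap.range tL1.mulVecLin)
  rw [hinf, finrank_bot, add_zero] at h1
  have h2 := LinearMap.finrank_range_add_finrank_ker tL1.mulVecLin
  apply Submodule.eq_top_of_finrank_eq
  rw [h1, add_comm, h2]
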